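/- arXiv:math/0301152 — 2 statements merged into one kernel-verified Lean document; each statement's English description precedes it below -/
import Mathlib

section
/- Kronecker diagonalization of block Toeplitz+Hankel matrices: if B is an mn×mn block matrix whose (k,l)-th block is B^{(|k−l|)} + B^{(k+l mod reflection)} where each B^{(j)} is an m×m Toeplitz+Hankel matrix of the form toep(b) + J toep(Jb) (so each block is DCT-I-diagonalizable), and the block structure is itself of symmetric Toeplitz-plus-Hankel type, then B is diagonalized by the two-dimensional DCT-I, i.e., (C_n ⊗ C_m)^T B (C_n ⊗ C_m) is diagonal. -/
open Real Matrix

section Aux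

open Finset

private lemma trigT' (N : ℕ) (hN : 1 ≤ N) (a : ℤ) (ha : ¬ ((2*(N:ℤ)) ∣ a)) :
    ∑ k ∈ Finset.range (N+1), (if k = 0 ∨ k = N then (1:ℝ) else 2) * Real.cos (π * a * k / N) = 0 := by
  have hN0 : (N:ℝ) ≠ 0 := by positivity
  set θ : ℝ := π * a / N with hθ
  set z : ℂ := Complex.exp (θ * Complex.I) with hzdef
  have hcos : ∀ k : ℕ, Real.cos (π * a * k / N) = (z^k).re := by
    intro k
    rw [hzdef, ← Complex.exp_nat_mul,
      show (k : ℂ) * (θ * Complex.I) = ((k * θ : ℝ) : ℂ) * Complex.I by push_cast; ring,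
      Complex.exp_ofReal_mul_I_re]
    congr 1
    field_simp [hθ]
    rw [hθ]; field_simp
  have hNθ : (N:ℝ) * θ = π * a := by rw [hθ]; field_simp
  have hz1 : z ≠ 1 := by
    intro h
    rw [hzdef, Complex.exp_eq_one_iff] at h
    obtain ⟨j, hj⟩ := h
    have h2 : (θ:ℂ) = (j:ℂ) * (2*(π:ℝ)) := by
      have h3 : ((j:ℂ) * (2 * (π:ℝ) * Complex.I)) = ((j:ℂ) * (2*(π:ℝ))) * Complex.I := by ring
      rw [h3] at hj
      exact mul_right_cancel₀ Complex.I_ne_zero hj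
    have hθj : θ = (j:ℝ) * (2*π) := by exact_mod_cast h2
    apply ha
    refine ⟨j, ?_⟩
    have hπ : (π:ℝ) ≠ 0 := Real.pi_ne_zero
    have h4 : π * (a:ℝ) = π * (2*N*j) := by
      rw [← hNθ, hθj]; ring
    have h5 : (a:ℝ) = 2*N*j := mul_left_cancel₀ hπ h4
    exact_mod_cast h5
  have hzsub : z - 1 ≠ 0 := sub_ne_zero.mpr hz1
  have hzN : z^N = (-1:ℂ)^a := by
    rw [hzdef, ← Complex.exp_nat_mul]
    have h6 : (N:ℂ) * (θ * Complex.I) = a * (π * Complex.I) :=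
      calc (N:ℂ) * (↑θ * Complex.I) = ((((N:ℝ) * θ : ℝ)):ℂ) * Complex.I := by push_cast; ring
        _ = ((π * a : ℝ):ℂ) * Complex.I := by rw [hNθ]
        _ = a * (π * Complex.I) := by push_cast; ring
    rw [h6, Complex.exp_int_mul, Complex.exp_pi_mul_I]
  have hsum : ∑ k ∈ Finset.range (N+1), (if k = 0 ∨ k = N then (1:ℝ) else 2) * Real.cos (π * a * k / N)
      = (∑ k ∈ Finset.range (N+1), (if k = 0 ∨ k = N then (1:ℂ) else 2) * z^k).re := by
    rw [Complex.re_sum]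
    refine Finset.sum_congr rfl fun k _ => ?_
    rw [hcos k]
    split_ifs <;> simp
  rw [hsum]
  have hexpand : (∑ k ∈ Finset.range (N+1), (if k = 0 ∨ k = N then (1:ℂ) else 2) * z^k)
      = 2 * ((z^(N+1) - 1)/(z - 1)) - 1 - z^N := by
    rw [← geom_sum_eq hz1]
    rw [Finset.mul_sum]
    have hterm : ∀ k ∈ Finset.range (N+1), (if k = 0 ∨ k = N then (1:ℂ) else 2) * z^k
        = 2 * z^k - ((if k = 0 then (1:ℂ) else 0) + (if k = N then (1:ℂ) else 0)) * z^k := by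
      intro k _
      rcases eq_or_ne k 0 with h0 | h0
      · subst h0
        rw [if_pos (Or.inl rfl), if_pos rfl, if_neg (by omega)]
        ring
      · rcases eq_or_ne k N with h1 | h1
        · subst h1
          rw [if_pos (Or.inr rfl), if_neg h0, if_pos rfl]
          ring
        · rw [if_neg (by tauto), if_neg h0, if_neg h1]
          ring
    rw [Finset.sum_congr rfl hterm, Finset.sum_sub_distrib]
    have h2 : ∑ k ∈ Finset.range (N+1), ((if k = 0 then (1:ℂ) else 0) + (if k = N then (1:ℂ) else 0)) * z^k
        = 1 + z^N := by
      simp only [add_mul, Finset.sum_add_distrib, ite_mul, one_mul, zero_mul]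
      rw [Finset.sum_ite_eq' (Finset.range (N+1)) 0, Finset.sum_ite_eq' (Finset.range (N+1)) N]
      simp
    rw [h2]; ring
  rw [hexpand]
  rcases Int.even_or_odd a with he | ho
  · have h1 : (-1:ℂ)^a = 1 := he.neg_one_zpow
    rw [hzN, h1, pow_succ, hzN, h1, one_mul, div_self hzsub]
    norm_num
  · have hm1 : (-1:ℂ)^a = -1 := Odd.neg_one_zpow ho
    rw [hzN, hm1, pow_succ, hzN, hm1, neg_one_mul]
    have habs : ‖z‖ = 1 := Complex.norm_exp_ofReal_mul_I θ
    have hz0 : z ≠ 0 := by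
      intro h; rw [h] at habs; simp at habs
    have hconj : (starRingEnd ℂ) z = z⁻¹ := by
      rw [hzdef, ← Complex.exp_conj, ← Complex.exp_neg]
      congr 1
      rw [_root_.map_mul, Complex.conj_I, Complex.conj_ofReal]
      ring
    have hinv : z⁻¹ - 1 ≠ 0 := by
      intro h
      have h7 : z⁻¹ = 1 := by linear_combination h
      apply hz1
      field_simp at h7
      exact h7.symm
    set w : ℂ := (z + 1)/(z - 1) with hw
    have hcw : (starRingEnd ℂ) w = -w := by
      rw [hw, map_div₀, map_add, map_sub, _root_.map_one, hconj]
      have h1z : (1:ℂ) - z ≠ 0 := sub_ne_zero.mpr (Ne.symm hz1)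
      field_simp [h1z]
      ring
    have hre : w.re = 0 := by
      have h2 := Complex.add_conj w
      rw [hcw] at h2
      simp at h2
      exact_mod_cast h2
    have heq : 2 * ((-z - 1)/(z-1)) - 1 - -1 = -2 * w := by
      rw [hw]; field_simp; ring
    rw [heq]
    simp [Complex.mul_re, hre]

private lemma notdvd' (N : ℕ) (a : ℤ) (h0 : a ≠ 0) (h1 : |a| < 2*N) : ¬ ((2*(N:ℤ)) ∣ a) := by
  intro hd
  have h2 : (2*(N:ℤ)) ∣ |a| := (dvd_abs _ _).mpr hd
  have h3 := Int.le_of_dvd (abs_pos.mpr h0) h2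
  omega

private lemma trigS' (m : ℕ) (hm : 2 ≤ m) (l t : Fin m) (hlt : l ≠ t) :
    ∑ k : Fin m, (if (k:ℕ) = 0 ∨ (k:ℕ) = m - 1 then (1:ℝ) else 2) *
      (Real.cos (π * k * l / ((m:ℝ)-1)) * Real.cos (π * k * t / ((m:ℝ)-1))) = 0 := by
  set N : ℕ := m - 1 with hNdef
  have hN1 : 1 ≤ N := by omega
  have hmN : m = N + 1 := by omega
  have hcastN : ((m:ℝ) - 1) = (N:ℝ) := by
    rw [hNdef]; push_cast [Nat.cast_sub (by omega : 1 ≤ m)]; ring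
  have hNr : (N:ℝ) ≠ 0 := by positivity
  set a1 : ℤ := (l:ℕ) - (t:ℕ) with ha1
  set a2 : ℤ := (l:ℕ) + (t:ℕ) with ha2
  have hlN : (l:ℕ) ≤ N := by omega
  have htN : (t:ℕ) ≤ N := by omega
  have hne : (l:ℕ) ≠ (t:ℕ) := fun h => hlt (Fin.ext h)
  have hd1 : ¬ ((2*(N:ℤ)) ∣ a1) := by
    refine notdvd' N a1 (by omega) ?_
    rw [Int.abs_eq_natAbs]
    omega
  have hd2 : ¬ ((2*(N:ℤ)) ∣ a2) := by
    refine notdvd' N a2 (by omega) ?_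
    rw [Int.abs_eq_natAbs]
    omega
  have key : ∀ k : ℕ,
      (if k = 0 ∨ k = m - 1 then (1:ℝ) else 2) *
        (Real.cos (π * k * l / ((m:ℝ)-1)) * Real.cos (π * k * t / ((m:ℝ)-1)))
      = ((if k = 0 ∨ k = N then (1:ℝ) else 2) * Real.cos (π * a1 * k / N)
        + (if k = 0 ∨ k = N then (1:ℝ) else 2) * Real.cos (π * a2 * k / N)) / 2 := by
    intro k
    have hA : π * k * l / ((m:ℝ)-1) - π * k * t / ((m:ℝ)-1) = π * a1 * k / N := by
      rw [hcastN, ha1]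
      push_cast
      field_simp
    have hB : π * k * l / ((m:ℝ)-1) + π * k * t / ((m:ℝ)-1) = π * a2 * k / N := by
      rw [hcastN, ha2]
      push_cast
      field_simp
    have hprod : Real.cos (π * k * l / ((m:ℝ)-1)) * Real.cos (π * k * t / ((m:ℝ)-1))
        = (Real.cos (π * a1 * k / N) + Real.cos (π * a2 * k / N)) / 2 := by
      rw [← hA, ← hB]
      rw [Real.cos_sub, Real.cos_add]
      ring
    rw [hprod, hNdef]
    ring
  calc ∑ k : Fin m, (if (k:ℕ) = 0 ∨ (k:ℕ) = m - 1 then (1:ℝ) else 2) *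
      (Real.cos (π * k * l / ((m:ℝ)-1)) * Real.cos (π * k * t / ((m:ℝ)-1)))
      = ∑ k ∈ Finset.range (N+1), (if k = 0 ∨ k = m - 1 then (1:ℝ) else 2) *
        (Real.cos (π * k * l / ((m:ℝ)-1)) * Real.cos (π * k * t / ((m:ℝ)-1))) := by
        rw [← hmN]
        exact Fin.sum_univ_eq_sum_range (fun k : ℕ => (if k = 0 ∨ k = m - 1 then (1:ℝ) else 2) *
          (Real.cos (π * k * l / ((m:ℝ)-1)) * Real.cos (π * k * t / ((m:ℝ)-1)))) m
    _ = ∑ k ∈ Finset.range (N+1),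
        ((if k = 0 ∨ k = N then (1:ℝ) else 2) * Real.cos (π * a1 * k / N)
        + (if k = 0 ∨ k = N then (1:ℝ) else 2) * Real.cos (π * a2 * k / N)) / 2 := by
        exact Finset.sum_congr rfl fun k _ => key k
    _ = ((∑ k ∈ Finset.range (N+1), (if k = 0 ∨ k = N then (1:ℝ) else 2) * Real.cos (π * a1 * k / N))
        + ∑ k ∈ Finset.range (N+1), (if k = 0 ∨ k = N then (1:ℝ) else 2) * Real.cos (π * a2 * k / N)) / 2 := by
        rw [← Finset.sum_div, Finset.sum_add_distrib]
    _ = 0 := by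
        rw [trigT' N hN1 a1 hd1, trigT' N hN1 a2 hd2]
        norm_num

private lemma fold' (N k l t : ℕ) (hN : 1 ≤ N) (hk : k ≤ N) (hl : l ≤ N) :
    Real.cos (π * (((k:ℤ) - l).natAbs : ℕ) * t / N)
      + Real.cos (π * ((N - (((N:ℤ) - k - l).natAbs : ℕ) : ℕ)) * t / N)
    = 2 * Real.cos (π * k * t / N) * Real.cos (π * l * t / N) := by
  have hNr : (N:ℝ) ≠ 0 := by positivity
  have habs1 : ((((k:ℤ) - l).natAbs : ℕ) : ℝ) = |(k:ℝ) - l| := by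
    rw [Nat.cast_natAbs]
    push_cast
    ring
  have hle : (((N:ℤ) - k - l).natAbs : ℕ) ≤ N := by
    omega
  have habs2 : (((N - (((N:ℤ) - k - l).natAbs : ℕ)) : ℕ) : ℝ) = (N:ℝ) - |(N:ℝ) - k - l| := by
    rw [Nat.cast_sub hle]
    congr 1
    rw [Nat.cast_natAbs]
    push_cast
    ring
  have h1 : Real.cos (π * (((k:ℤ) - l).natAbs : ℕ) * t / N) = Real.cos (π * ((k:ℝ) - l) * t / N) := by
    rw [habs1]
    rcases abs_cases ((k:ℝ) - l) with ⟨h, _⟩ | ⟨h, _⟩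
    · rw [h]
    · rw [h, show π * -((k:ℝ) - l) * t / N = -(π * ((k:ℝ)-l) * t / N) by ring, Real.cos_neg]
  have h2 : Real.cos (π * ((N - (((N:ℤ) - k - l).natAbs : ℕ) : ℕ)) * t / N)
      = Real.cos (π * ((k:ℝ) + l) * t / N) := by
    rw [habs2]
    have e1 : π * ((N:ℝ) - |(N:ℝ) - k - l|) * t / N = (t:ℝ) * π - π * |(N:ℝ) - k - l| * t / N := by
      field_simp
    rw [e1, Real.cos_nat_mul_pi_sub]
    have e2 : Real.cos (π * |(N:ℝ) - k - l| * t / N) = Real.cos (π * ((N:ℝ) - k - l) * t / N) := by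
      rcases abs_cases ((N:ℝ) - k - l) with ⟨h, _⟩ | ⟨h, _⟩
      · rw [h]
      · rw [h, show π * -((N:ℝ) - k - l) * t / N = -(π * ((N:ℝ)-k-l) * t / N) by ring, Real.cos_neg]
    rw [e2]
    have e3 : π * ((N:ℝ) - k - l) * t / N = (t:ℝ) * π - π * ((k:ℝ) + l) * t / N := by
      field_simp; ring
    rw [e3, Real.cos_nat_mul_pi_sub, ← mul_assoc, ← mul_pow]
    norm_num
  rw [h1, h2]
  have e4 : π * ((k:ℝ) - l) * t / N = π * k * t / N - π * l * t / N := by ring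
  have e5 : π * ((k:ℝ) + l) * t / N = π * k * t / N + π * l * t / N := by ring
  rw [e4, e5, Real.cos_sub, Real.cos_add]
  ring

/-- The (unnormalized) DCT-I cosine matrix. -/
private noncomputable def Vmat (m : ℕ) : Matrix (Fin m) (Fin m) ℝ :=
  Matrix.of fun j t : Fin m => Real.cos (π * j * t / ((m:ℝ) - 1))

private lemma Vmat_apply (m : ℕ) (j t : Fin m) :
    Vmat m j t = Real.cos (π * j * t / ((m:ℝ) - 1)) := rfl

private lemma VEV (m : ℕ) (hm : 2 ≤ m) :
    (Vmat m)ᵀ * Matrix.diagonal (fun k : Fin m => if (k:ℕ) = 0 ∨ (k:ℕ) = m-1 then (1:ℝ) else 2)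
        * Vmat m
      = Matrix.diagonal (fun t => ∑ k : Fin m,
          (if (k:ℕ) = 0 ∨ (k:ℕ) = m-1 then (1:ℝ) else 2) * (Vmat m k t)^2) := by
  ext l t
  rw [Matrix.mul_apply]
  simp only [Matrix.mul_diagonal, Matrix.transpose_apply]
  by_cases h : l = t
  · subst h
    rw [Matrix.diagonal_apply_eq]
    exact Finset.sum_congr rfl fun k _ => by ring
  · rw [Matrix.diagonal_apply_ne _ h, ← trigS' m hm l t h]
    refine Finset.sum_congr rfl fun k _ => ?_
    rw [Vmat_apply, Vmat_apply]
    ring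

private lemma Vdet (m : ℕ) (hm : 2 ≤ m) : (Vmat m).det ≠ 0 := by
  intro h
  have h1 := congrArg Matrix.det (VEV m hm)
  rw [Matrix.det_mul, Matrix.det_mul, Matrix.det_transpose, h, Matrix.det_diagonal,
    Matrix.det_diagonal] at h1
  have hpos : ∀ t : Fin m,
      (1:ℝ) ≤ ∑ k : Fin m, (if (k:ℕ) = 0 ∨ (k:ℕ) = m-1 then (1:ℝ) else 2) * (Vmat m k t)^2 := by
    intro t
    have hk0 : ((⟨0, by omega⟩ : Fin m) : ℕ) = 0 := rfl
    have hterm : (if ((⟨0, by omega⟩ : Fin m):ℕ) = 0 ∨ ((⟨0, by omega⟩ : Fin m):ℕ) = m-1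
        then (1:ℝ) else 2) * (Vmat m ⟨0, by omega⟩ t)^2 = 1 := by
      rw [if_pos (Or.inl hk0), Vmat_apply]
      rw [show π * ((⟨0, by omega⟩ : Fin m):ℕ) * t / ((m:ℝ)-1) = 0 by rw [hk0]; norm_num]
      norm_num
    calc (1:ℝ) = (if ((⟨0, by omega⟩ : Fin m):ℕ) = 0 ∨ ((⟨0, by omega⟩ : Fin m):ℕ) = m-1
          then (1:ℝ) else 2) * (Vmat m ⟨0, by omega⟩ t)^2 := hterm.symm
      _ ≤ _ := by
          refine Finset.single_le_sum (f := fun k : Fin m =>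
            (if (k:ℕ) = 0 ∨ (k:ℕ) = m-1 then (1:ℝ) else 2) * (Vmat m k t)^2)
            (fun k _ => ?_) (Finset.mem_univ _)
          have := sq_nonneg (Vmat m k t)
          split_ifs <;> nlinarith
  simp only [mul_zero, zero_mul] at h1
  obtain ⟨t, _, ht⟩ := Finset.prod_eq_zero_iff.mp h1.symm
  linarith [hpos t]

private lemma CtVdiag (m : ℕ) (hm : 2 ≤ m) (Cm : Matrix (Fin m) (Fin m) ℝ)
    (hCm : ∀ k l : Fin m, Cm k l =
      (if (k : ℕ) = 0 ∨ (k : ℕ) = m - 1 then 1 else 2) / Real.sqrt (2 * m - 2) *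
        Real.cos (Real.pi * k * l / (m - 1))) :
    Cmᵀ * Vmat m = Matrix.diagonal (fun t => ∑ k : Fin m, Cm k t * Vmat m k t)
    ∧ (Vmat m)ᵀ * Cm = Matrix.diagonal (fun t => ∑ k : Fin m, Cm k t * Vmat m k t) := by
  have hzero : ∀ l t : Fin m, l ≠ t → ∑ k : Fin m, Cm k l * Vmat m k t = 0 := by
    intro l t h
    have h2 := trigS' m hm l t h
    calc ∑ k : Fin m, Cm k l * Vmat m k t
        = ∑ k : Fin m, (1/Real.sqrt (2 * m - 2)) *
          ((if (k:ℕ) = 0 ∨ (k:ℕ) = m - 1 then (1:ℝ) else 2) *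
            (Real.cos (π * k * l / ((m:ℝ)-1)) * Real.cos (π * k * t / ((m:ℝ)-1)))) := by
          refine Finset.sum_congr rfl fun k _ => ?_
          rw [hCm, Vmat_apply]
          ring
      _ = (1/Real.sqrt (2 * m - 2)) * ∑ k : Fin m,
          ((if (k:ℕ) = 0 ∨ (k:ℕ) = m - 1 then (1:ℝ) else 2) *
            (Real.cos (π * k * l / ((m:ℝ)-1)) * Real.cos (π * k * t / ((m:ℝ)-1)))) :=
          (Finset.mul_sum _ _ _).symm
      _ = 0 := by rw [h2, mul_zero]
  constructor
  · ext l t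
    rw [Matrix.mul_apply]
    simp only [Matrix.transpose_apply]
    by_cases h : l = t
    · subst h
      rw [Matrix.diagonal_apply_eq]
    · rw [Matrix.diagonal_apply_ne _ h]
      exact hzero l t h
  · ext i j
    rw [Matrix.mul_apply]
    simp only [Matrix.transpose_apply]
    by_cases h : i = j
    · subst h
      rw [Matrix.diagonal_apply_eq]
      exact Finset.sum_congr rfl fun k _ => mul_comm _ _
    · rw [Matrix.diagonal_apply_ne _ h, ← hzero j i (Ne.symm h)]
      exact Finset.sum_congr rfl fun k _ => mul_comm _ _

end Aux

/-- Kronecker diagonalization of block Toeplitz+Hankel matrices: if `B` is the block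
matrix whose `(k,l)` block is `B^{(|k−l|)} + B^{(σ_n(k,l))}` (block Toeplitz plus block
Hankel pattern, with `σ_n(k,l) = n−1−|n−1−k−l|`) and each block
`B^{(j)} = toep(b_j) + J·toep(J b_j)` is itself an `m×m` Toeplitz+Hankel matrix (entries
`b_j(|i−i'|) + b_j(σ_m(i,i'))`), then `B` is diagonalized by the two-dimensional DCT-I:
`(C_n ⊗ C_m)ᵀ B (C_n ⊗ C_m)` is diagonal. -/
theorem kronecker_dct1_diagonalizes_block_toeplitz_hankel (m n : ℕ)
    (hm : 2 ≤ m) (hn : 2 ≤ n)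
    (Cm : Matrix (Fin m) (Fin m) ℝ) (Cn : Matrix (Fin n) (Fin n) ℝ)
    (hCm : ∀ k l : Fin m, Cm k l =
      (if (k : ℕ) = 0 ∨ (k : ℕ) = m - 1 then 1 else 2) / Real.sqrt (2 * m - 2) *
        Real.cos (Real.pi * k * l / (m - 1)))
    (hCn : ∀ k l : Fin n, Cn k l =
      (if (k : ℕ) = 0 ∨ (k : ℕ) = n - 1 then 1 else 2) / Real.sqrt (2 * n - 2) *
        Real.cos (Real.pi * k * l / (n - 1)))
    (b : ℕ → ℕ → ℝ)
    (B : Matrix (Fin n × Fin m) (Fin n × Fin m) ℝ)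
    (hB : ∀ p q : Fin n × Fin m, B p q =
      b (((p.1 : ℕ) : ℤ) - ((q.1 : ℕ) : ℤ)).natAbs (((p.2 : ℕ) : ℤ) - ((q.2 : ℕ) : ℤ)).natAbs +
      b (((p.1 : ℕ) : ℤ) - ((q.1 : ℕ) : ℤ)).natAbs
        (m - 1 - (((m : ℤ) - 1) - (p.2 : ℕ) - (q.2 : ℕ)).natAbs) +
      b (n - 1 - (((n : ℤ) - 1) - (p.1 : ℕ) - (q.1 : ℕ)).natAbs)
        (((p.2 : ℕ) : ℤ) - ((q.2 : ℕ) : ℤ)).natAbs +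
      b (n - 1 - (((n : ℤ) - 1) - (p.1 : ℕ) - (q.1 : ℕ)).natAbs)
        (m - 1 - (((m : ℤ) - 1) - (p.2 : ℕ) - (q.2 : ℕ)).natAbs)) :
    ∃ d : Fin n × Fin m → ℝ,
      (Matrix.kroneckerMap (· * ·) Cn Cm)ᵀ * B * Matrix.kroneckerMap (· * ·) Cn Cm =
        Matrix.diagonal d := by
  classical
  have h1n : (1:ℕ) ≤ n - 1 := by omega
  have h1m : (1:ℕ) ≤ m - 1 := by omega
  have hcastn : ((n - 1 : ℕ) : ℝ) = (n:ℝ) - 1 := by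
    rw [Nat.cast_sub (by omega : 1 ≤ n), Nat.cast_one]
  have hcastm : ((m - 1 : ℕ) : ℝ) = (m:ℝ) - 1 := by
    rw [Nat.cast_sub (by omega : 1 ≤ m), Nat.cast_one]
  have hcastZn : ((n - 1 : ℕ) : ℤ) = (n:ℤ) - 1 := by omega
  have hcastZm : ((m - 1 : ℕ) : ℤ) = (m:ℤ) - 1 := by omega
  have hUn : IsUnit (Vmat n).det := isUnit_iff_ne_zero.mpr (Vdet n hn)
  have hUmT : IsUnit ((Vmat m)ᵀ).det := by
    rw [Matrix.det_transpose]; exact isUnit_iff_ne_zero.mpr (Vdet m hm)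
  set bM : Matrix (Fin n) (Fin m) ℝ := Matrix.of (fun j i : _ => b j i) with hbMdef
  set γ : Matrix (Fin n) (Fin m) ℝ := (Vmat n)⁻¹ * bM * ((Vmat m)ᵀ)⁻¹ with hγdef
  have hbM : Vmat n * γ * (Vmat m)ᵀ = bM := by
    rw [hγdef]
    calc Vmat n * ((Vmat n)⁻¹ * bM * ((Vmat m)ᵀ)⁻¹) * (Vmat m)ᵀ
        = (Vmat n * (Vmat n)⁻¹) * (bM * (((Vmat m)ᵀ)⁻¹ * (Vmat m)ᵀ)) := by
          simp only [Matrix.mul_assoc]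
      _ = bM := by
          rw [Matrix.mul_nonsing_inv _ hUn, Matrix.nonsing_inv_mul _ hUmT,
            Matrix.one_mul, Matrix.mul_one]
  have hbeval : ∀ (j : ℕ) (hj : j < n) (i : ℕ) (hi : i < m),
      b j i = ∑ u : Fin m, ∑ t : Fin n, Vmat n ⟨j, hj⟩ t * γ t u * Vmat m ⟨i, hi⟩ u := by
    intro j hj i hi
    have h0 : bM ⟨j, hj⟩ ⟨i, hi⟩ = b j i := rfl
    rw [← h0, ← hbM]
    simp only [Matrix.mul_apply, Matrix.transpose_apply, Finset.sum_mul]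
  have hfoldn : ∀ (a c t : Fin n)
      (h1 : (((a:ℕ):ℤ) - ((c:ℕ):ℤ)).natAbs < n)
      (h2 : n - 1 - (((n:ℤ) - 1) - (a:ℕ) - (c:ℕ)).natAbs < n),
      Vmat n ⟨(((a:ℕ):ℤ) - ((c:ℕ):ℤ)).natAbs, h1⟩ t
        + Vmat n ⟨n - 1 - (((n:ℤ) - 1) - (a:ℕ) - (c:ℕ)).natAbs, h2⟩ t
      = 2 * Vmat n a t * Vmat n c t := by
    intro a c t h1 h2
    have hf := fold' (n-1) (a:ℕ) (c:ℕ) (t:ℕ) h1n (by omega) (by omega)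
    rw [hcastZn, hcastn] at hf
    simp only [Vmat_apply]
    exact hf
  have hfoldm : ∀ (a c t : Fin m)
      (h1 : (((a:ℕ):ℤ) - ((c:ℕ):ℤ)).natAbs < m)
      (h2 : m - 1 - (((m:ℤ) - 1) - (a:ℕ) - (c:ℕ)).natAbs < m),
      Vmat m ⟨(((a:ℕ):ℤ) - ((c:ℕ):ℤ)).natAbs, h1⟩ t
        + Vmat m ⟨m - 1 - (((m:ℤ) - 1) - (a:ℕ) - (c:ℕ)).natAbs, h2⟩ t
      = 2 * Vmat m a t * Vmat m c t := by
    intro a c t h1 h2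
    have hf := fold' (m-1) (a:ℕ) (c:ℕ) (t:ℕ) h1m (by omega) (by omega)
    rw [hcastZm, hcastm] at hf
    simp only [Vmat_apply]
    exact hf
  have hBdec : B = Matrix.kroneckerMap (· * ·) (Vmat n) (Vmat m)
      * Matrix.diagonal (fun tu : Fin n × Fin m => 4 * γ tu.1 tu.2)
      * (Matrix.kroneckerMap (· * ·) (Vmat n) (Vmat m))ᵀ := by
    ext p q
    have e1 : (((p.1:ℕ):ℤ) - ((q.1:ℕ):ℤ)).natAbs < n := by
      have := p.1.isLt; have := q.1.isLt; omega
    have e2 : n - 1 - (((n:ℤ) - 1) - (p.1:ℕ) - (q.1:ℕ)).natAbs < n := by omega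
    have f1 : (((p.2:ℕ):ℤ) - ((q.2:ℕ):ℤ)).natAbs < m := by
      have := p.2.isLt; have := q.2.isLt; omega
    have f2 : m - 1 - (((m:ℤ) - 1) - (p.2:ℕ) - (q.2:ℕ)).natAbs < m := by omega
    rw [hB p q, hbeval _ e1 _ f1, hbeval _ e1 _ f2, hbeval _ e2 _ f1, hbeval _ e2 _ f2]
    rw [Matrix.mul_apply, Fintype.sum_prod_type]
    simp only [Matrix.mul_diagonal, Matrix.transpose_apply, Matrix.kroneckerMap_apply]
    conv_rhs => rw [Finset.sum_comm]
    simp only [← Finset.sum_add_distrib]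
    refine Finset.sum_congr rfl fun u _ => ?_
    refine Finset.sum_congr rfl fun t _ => ?_
    have g1 := hfoldn p.1 q.1 t e1 e2
    have g2 := hfoldm p.2 q.2 u f1 f2
    linear_combination (γ t u * (Vmat m ⟨(((p.2:ℕ):ℤ) - ((q.2:ℕ):ℤ)).natAbs, f1⟩ u
        + Vmat m ⟨m - 1 - (((m:ℤ) - 1) - (p.2:ℕ) - (q.2:ℕ)).natAbs, f2⟩ u)) * g1
      + (γ t u * 2 * Vmat n p.1 t * Vmat n q.1 t) * g2
  obtain ⟨hCtVm, hVtCm⟩ := CtVdiag m hm Cm hCm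
  obtain ⟨hCtVn, hVtCn⟩ := CtVdiag n hn Cn hCn
  refine ⟨fun tu : Fin n × Fin m =>
    ((∑ k : Fin n, Cn k tu.1 * Vmat n k tu.1) * (∑ k : Fin m, Cm k tu.2 * Vmat m k tu.2)
      * (4 * γ tu.1 tu.2))
    * ((∑ k : Fin n, Cn k tu.1 * Vmat n k tu.1) * (∑ k : Fin m, Cm k tu.2 * Vmat m k tu.2)), ?_⟩
  rw [hBdec]
  rw [show (Matrix.kroneckerMap (· * ·) Cn Cm)ᵀ = Matrix.kroneckerMap (· * ·) Cnᵀ Cmᵀ from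
    (Matrix.kroneckerMap_transpose _ _ _).symm]
  rw [show (Matrix.kroneckerMap (· * ·) (Vmat n) (Vmat m))ᵀ
      = Matrix.kroneckerMap (· * ·) (Vmat n)ᵀ (Vmat m)ᵀ from
    (Matrix.kroneckerMap_transpose _ _ _).symm]
  rw [show Matrix.kroneckerMap (· * ·) Cnᵀ Cmᵀ
        * (Matrix.kroneckerMap (· * ·) (Vmat n) (Vmat m)
          * Matrix.diagonal (fun tu : Fin n × Fin m => 4 * γ tu.1 tu.2)
          * Matrix.kroneckerMap (· * ·) (Vmat n)ᵀ (Vmat m)ᵀ)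
        * Matrix.kroneckerMap (· * ·) Cn Cm
      = (Matrix.kroneckerMap (· * ·) Cnᵀ Cmᵀ * Matrix.kroneckerMap (· * ·) (Vmat n) (Vmat m))
        * Matrix.diagonal (fun tu : Fin n × Fin m => 4 * γ tu.1 tu.2)
        * (Matrix.kroneckerMap (· * ·) (Vmat n)ᵀ (Vmat m)ᵀ * Matrix.kroneckerMap (· * ·) Cn Cm)
      from by simp only [Matrix.mul_assoc]]
  rw [← Matrix.mul_kronecker_mul, ← Matrix.mul_kronecker_mul, hCtVn, hCtVm, hVtCn, hVtCm,
    Matrix.diagonal_kronecker_diagonal, Matrix.diagonal_mul_diagonal,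
    Matrix.diagonal_mul_diagonal]
end

section
/- For equally spaced sampling points x_j = (j−1)/(r−1), j = 1, ..., r, with weights w_j = (x_{j+1}−x_{j−1})/2 (using x_0 = −x_1, x_{r+1} = 2−x_r) and polynomial degree M < r−1, the matrix A = V^T V equals (1/2)I_{M+1}, i.e., the scaled cosine basis functions are exactly orthonormal (up to factor 1/2) with respect to this quadrature rule. -/
open Real Matrix

private lemma geom_cos (n m : ℕ) (hn : 1 ≤ n) (hm1 : 1 ≤ m) (hm2 : m ≤ 2 * n - 2) :
    ∑ j ∈ Finset.range n, Real.cos (π * m / n * j) =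
      if Even m then 0 else 1 := by
  have hn0 : (0:ℝ) < n := by exact_mod_cast hn
  set θ : ℝ := π * m / n with hθ
  have hm0 : (0:ℝ) < m := by exact_mod_cast hm1
  have hθpos : 0 < θ := by positivity
  have hmlt : (m:ℝ) < 2 * n := by
    have : m < 2 * n := by omega
    exact_mod_cast this
  have hθlt : θ < 2 * π := by
    rw [hθ, div_lt_iff₀ hn0]
    calc π * m < π * (2 * n) := by
          exact mul_lt_mul_of_pos_left hmlt Real.pi_pos
      _ = 2 * π * n := by ring
  have hcos : Real.cos θ ≠ 1 := by
    intro h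
    have := (Real.cos_eq_one_iff_of_lt_of_lt (by linarith [Real.pi_pos]) hθlt).mp h
    linarith
  set z : ℂ := Complex.exp (θ * Complex.I) with hz
  have hzre : z.re = Real.cos θ := Complex.exp_ofReal_mul_I_re θ
  have hzim : z.im = Real.sin θ := Complex.exp_ofReal_mul_I_im θ
  have hz1 : z ≠ 1 := by
    intro h
    apply hcos
    rw [← hzre, h]; simp
  have hcosj : ∀ j : ℕ, Real.cos (θ * j) = (z ^ j).re := by
    intro j
    rw [hz, ← Complex.exp_nat_mul]
    have : (j : ℂ) * (↑θ * Complex.I) = ((θ * j : ℝ) : ℂ) * Complex.I := by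
      push_cast; ring
    rw [this, Complex.exp_ofReal_mul_I_re]
  have hzn : z ^ n = (-1 : ℂ) ^ m := by
    rw [hz, ← Complex.exp_nat_mul, ← Complex.exp_pi_mul_I, ← Complex.exp_nat_mul]
    congr 1
    have : (θ : ℂ) = π * m / n := by rw [hθ]; push_cast; ring
    rw [this]
    have hn0' : (n : ℂ) ≠ 0 := by exact_mod_cast (by positivity : (n:ℝ) ≠ 0)
    field_simp
  have hsum : ∑ j ∈ Finset.range n, z ^ j = (z ^ n - 1) / (z - 1) := geom_sum_eq hz1 n
  have htrans : ∑ j ∈ Finset.range n, Real.cos (π * m / n * j)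
      = ((∑ j ∈ Finset.range n, z ^ j)).re := by
    rw [Complex.re_sum]
    refine Finset.sum_congr rfl fun j _ => ?_
    rw [← hcosj j, hθ]
  rw [htrans, hsum, hzn]
  rcases Nat.even_or_odd m with he | ho
  · rw [he.neg_one_pow]
    simp [if_pos he]
  · rw [ho.neg_one_pow]
    rw [if_neg (by simpa using ho)]
    have hne : Complex.normSq (z - 1) = 2 - 2 * Real.cos θ := by
      rw [Complex.normSq_apply]
      simp only [Complex.sub_re, Complex.sub_im, Complex.one_re, Complex.one_im, hzre, hzim]
      have := Real.sin_sq_add_cos_sq θ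
      nlinarith
    have hden : (2 : ℝ) - 2 * Real.cos θ ≠ 0 := by
      intro h
      apply hcos; linarith
    rw [Complex.div_re]
    simp only [Complex.sub_re, Complex.sub_im, Complex.one_re, Complex.one_im, hzre, hzim, hne,
      Complex.neg_re, Complex.neg_im]
    norm_num
    field_simp
    ring

private lemma keyS (n m : ℕ) (hn : 1 ≤ n) (hm2 : m ≤ 2 * n - 2) :
    ∑ j ∈ Finset.range (n + 1), (if j = 0 ∨ j = n then (1/2 : ℝ) else 1) *
        Real.cos (π * m * (j / n))
      = if m = 0 then (n : ℝ) else 0 := by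
  have hn0 : (0:ℝ) < n := by exact_mod_cast hn
  obtain ⟨p, rfl⟩ : ∃ p, n = p + 1 := ⟨n - 1, by omega⟩
  have decomp : ∀ f : ℕ → ℝ,
      ∑ j ∈ Finset.range (p + 1 + 1), (if j = 0 ∨ j = p + 1 then (1/2 : ℝ) else 1) * f j
      = ∑ j ∈ Finset.range (p + 1), f j - f 0 / 2 + f (p + 1) / 2 := by
    intro f
    rw [Finset.sum_range_succ, Finset.sum_range_succ']
    have h1 : ∀ j ∈ Finset.range p,
        (if j + 1 = 0 ∨ j + 1 = p + 1 then (1/2 : ℝ) else 1) * f (j + 1) = f (j + 1) := by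
      intro j hj
      rw [Finset.mem_range] at hj
      rw [if_neg (by omega)]; ring
    rw [Finset.sum_congr rfl h1]
    have h2 : ∑ j ∈ Finset.range (p + 1), f j = ∑ j ∈ Finset.range p, f (j + 1) + f 0 :=
      Finset.sum_range_succ' f p
    rw [h2]
    norm_num
    ring
  rw [decomp]
  set n := p + 1
  rcases Nat.eq_zero_or_pos m with hm | hm
  · subst hm
    simp only [Nat.cast_zero, mul_zero, zero_mul, Real.cos_zero, if_pos rfl]
    rw [Finset.sum_const, Finset.card_range]
    push_cast; ring
  · rw [if_neg (by omega)]
    have hf0 : Real.cos (π * m * ((0:ℕ) / (n:ℝ))) = 1 := by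
      norm_num
    have hfn : Real.cos (π * m * ((n:ℕ) / (n:ℝ))) = (-1 : ℝ) ^ m := by
      rw [div_self (ne_of_gt hn0), mul_one]
      rw [mul_comm π (m:ℝ), ← sub_zero ((m:ℝ) * π), Real.cos_nat_mul_pi_sub, Real.cos_zero,
        mul_one]
    have hmid : ∑ j ∈ Finset.range n, Real.cos (π * m * ((j:ℕ) / (n:ℝ)))
        = if Even m then 0 else 1 := by
      rw [← geom_cos n m hn hm hm2]
      refine Finset.sum_congr rfl fun j _ => ?_
      congr 1; ring
    rw [hmid, hf0, hfn]
    rcases Nat.even_or_odd m with he | ho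
    · rw [he.neg_one_pow, if_pos he]; ring
    · rw [ho.neg_one_pow, if_neg (by simpa using ho)]; ring

private lemma pairSum (n k l : ℕ) (hn : 1 ≤ n) (hk1 : 1 ≤ k) (hl1 : 1 ≤ l)
    (hk2 : k ≤ n - 1) (hl2 : l ≤ n - 1) :
    ∑ j ∈ Finset.range (n + 1), (if j = 0 ∨ j = n then (1/2 : ℝ) else 1) *
        (Real.cos (π * k * (j / n)) * Real.cos (π * l * (j / n)))
      = if k = l then (n : ℝ) / 2 else 0 := by
  wlog hlk : l ≤ k with H
  · have := H n l k hn hl1 hk1 hl2 hk2 (by omega)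
    calc ∑ j ∈ Finset.range (n + 1), (if j = 0 ∨ j = n then (1/2 : ℝ) else 1) *
          (Real.cos (π * k * (j / n)) * Real.cos (π * l * (j / n)))
        = ∑ j ∈ Finset.range (n + 1), (if j = 0 ∨ j = n then (1/2 : ℝ) else 1) *
          (Real.cos (π * l * (j / n)) * Real.cos (π * k * (j / n))) := by
          refine Finset.sum_congr rfl fun j _ => by ring
      _ = if l = k then (n : ℝ) / 2 else 0 := this
      _ = if k = l then (n : ℝ) / 2 else 0 := by
          rcases eq_or_ne k l with h | h
          · rw [if_pos h.symm, if_pos h]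
          · rw [if_neg (Ne.symm h), if_neg h]
  have hprod : ∀ j : ℕ, Real.cos (π * k * ((j:ℕ) / (n:ℝ))) * Real.cos (π * l * ((j:ℕ) / (n:ℝ)))
      = (Real.cos (π * ((k - l : ℕ) : ℝ) * (j / n)) + Real.cos (π * ((k + l : ℕ) : ℝ) * (j / n))) / 2 := by
    intro j
    have hsub : ((k - l : ℕ) : ℝ) = (k : ℝ) - l := by
      push_cast [Nat.cast_sub hlk]; ring
    have hadd : ((k + l : ℕ) : ℝ) = (k : ℝ) + l := by push_cast; ring
    rw [hsub, hadd]
    have e1 : π * ((k:ℝ) - l) * ((j:ℝ) / n) = π * k * (j / n) - π * l * (j / n) := by ring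
    have e2 : π * ((k:ℝ) + l) * ((j:ℝ) / n) = π * k * (j / n) + π * l * (j / n) := by ring
    rw [e1, e2, Real.cos_sub, Real.cos_add]
    ring
  have hsplit : ∑ j ∈ Finset.range (n + 1), (if j = 0 ∨ j = n then (1/2 : ℝ) else 1) *
        (Real.cos (π * k * (j / n)) * Real.cos (π * l * (j / n)))
      = (∑ j ∈ Finset.range (n + 1), (if j = 0 ∨ j = n then (1/2 : ℝ) else 1) *
          Real.cos (π * ((k - l : ℕ) : ℝ) * (j / n))) / 2
        + (∑ j ∈ Finset.range (n + 1), (if j = 0 ∨ j = n then (1/2 : ℝ) else 1) *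
          Real.cos (π * ((k + l : ℕ) : ℝ) * (j / n))) / 2 := by
    rw [Finset.sum_div, Finset.sum_div, ← Finset.sum_add_distrib]
    refine Finset.sum_congr rfl fun j _ => ?_
    rw [hprod j]; ring
  rw [hsplit, keyS n (k - l) hn (by omega), keyS n (k + l) hn (by omega),
    if_neg (show ¬ (k + l = 0) by omega)]
  rcases eq_or_ne k l with h | h
  · rw [if_pos (by omega : k - l = 0), if_pos h]; ring
  · rw [if_neg (by omega : ¬ k - l = 0), if_neg h]; ring

/-- For equally spaced sampling points `x_j = (j−1)/(r−1)`, `j = 1, …, r`, with weights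
`w_j = (x_{j+1} − x_{j−1})/2` (so `w_1 = w_r = 1/(2(r−1))`, `w_j = 1/(r−1)` otherwise)
and degree `M < r − 1`, the matrix `A = VᵀV` equals `(1/2)·I`. -/
theorem equally_spaced_half_identity (r M : ℕ) (hr : 2 ≤ r) (hM : M < r - 1)
    (w : Fin r → ℝ)
    (hw : ∀ j : Fin r, w j = if (j : ℕ) = 0 ∨ (j : ℕ) = r - 1
      then 1 / (2 * ((r : ℝ) - 1)) else 1 / ((r : ℝ) - 1))
    (V : Matrix (Fin r) (Fin (M + 1)) ℝ)
    (hV : ∀ (j : Fin r) (k : Fin (M + 1)),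
      V j k = if (k : ℕ) = 0 then Real.sqrt (w j) / Real.sqrt 2
        else Real.sqrt (w j) * Real.cos (Real.pi * k * ((j : ℕ) / ((r : ℝ) - 1)))) :
    Vᵀ * V = (1 / 2 : ℝ) • 1 := by
  have hn1 : 1 ≤ r - 1 := by omega
  set n := r - 1 with hndef
  have hrn : r = n + 1 := by omega
  have hnR : ((r:ℝ) - 1) = (n:ℝ) := by
    rw [hrn]; push_cast; ring
  have hn0 : (0:ℝ) < n := by exact_mod_cast hn1
  have hwval : ∀ j : Fin r, w j = (if (j:ℕ) = 0 ∨ (j:ℕ) = n then (1/2 : ℝ) else 1) / n := by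
    intro j
    rw [hw j, hnR]
    split_ifs with h
    · ring
    · ring
  have hwnn : ∀ j : Fin r, 0 ≤ w j := by
    intro j
    rw [hwval j]
    split_ifs <;> positivity
  have hsqrt2 : Real.sqrt 2 * Real.sqrt 2 = 2 := Real.mul_self_sqrt (by norm_num)
  ext k l
  rw [Matrix.mul_apply]
  simp only [Matrix.transpose_apply, Matrix.smul_apply, Matrix.one_apply, smul_eq_mul]
  by_cases hk : (k : ℕ) = 0 <;> by_cases hl : (l : ℕ) = 0
  · -- both zero
    have hkl : k = l := Fin.ext (by omega)
    rw [if_pos hkl, mul_one]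
    have hsummand : ∀ j : Fin r,
        V j k * V j l = (if (j:ℕ) = 0 ∨ (j:ℕ) = n then (1/2 : ℝ) else 1) / n / 2 := by
      intro j
      rw [hV j k, hV j l, if_pos hk, if_pos hl, div_mul_div_comm,
        Real.mul_self_sqrt (hwnn j), hsqrt2, hwval j]
    rw [Finset.sum_congr rfl fun j _ => hsummand j,
      Fin.sum_univ_eq_sum_range (fun j => (if j = 0 ∨ j = n then (1/2 : ℝ) else 1) / n / 2) r,
      hrn]
    have := keyS n 0 hn1 (by omega)
    simp only [Nat.cast_zero, mul_zero, zero_mul, Real.cos_zero, mul_one, if_pos rfl, ↓reduceIte] at this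
    rw [show (∑ j ∈ Finset.range (n+1), (if j = 0 ∨ j = n then (1/2:ℝ) else 1) / ↑n / 2)
        = (∑ j ∈ Finset.range (n+1), (if j = 0 ∨ j = n then (1/2:ℝ) else 1)) / ↑n / 2 by
      rw [Finset.sum_div, Finset.sum_div], this]
    field_simp
  · -- k = 0, l ≠ 0
    have hkl : ¬ k = l := fun h => hl (h ▸ hk)
    rw [if_neg hkl, mul_zero]
    have hsummand : ∀ j : Fin r,
        V j k * V j l = ((if (j:ℕ) = 0 ∨ (j:ℕ) = n then (1/2 : ℝ) else 1) *
          Real.cos (π * l * ((j:ℕ) / (n:ℝ)))) / (n * Real.sqrt 2) := by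
      intro j
      rw [hV j k, hV j l, if_pos hk, if_neg hl, hnR]
      have : Real.sqrt (w j) / Real.sqrt 2 * (Real.sqrt (w j) * Real.cos (π * l * ((j:ℕ) / (n:ℝ))))
          = Real.sqrt (w j) * Real.sqrt (w j) * Real.cos (π * l * ((j:ℕ) / (n:ℝ))) / Real.sqrt 2 := by
        ring
      rw [this, Real.mul_self_sqrt (hwnn j), hwval j]
      have hs2 : Real.sqrt 2 ≠ 0 := by positivity
      field_simp
    rw [Finset.sum_congr rfl fun j _ => hsummand j,
      Fin.sum_univ_eq_sum_range (fun j => ((if j = 0 ∨ j = n then (1/2 : ℝ) else 1) *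
        Real.cos (π * l * ((j:ℕ) / (n:ℝ)))) / (n * Real.sqrt 2)) r, hrn,
      ← Finset.sum_div]
    have hlM : (l : ℕ) ≤ M := by omega
    rw [keyS n l hn1 (by omega), if_neg hl]
    simp
  · -- k ≠ 0, l = 0
    have hkl : ¬ k = l := fun h => hk (h ▸ hl)
    rw [if_neg hkl, mul_zero]
    have hsummand : ∀ j : Fin r,
        V j k * V j l = ((if (j:ℕ) = 0 ∨ (j:ℕ) = n then (1/2 : ℝ) else 1) *
          Real.cos (π * k * ((j:ℕ) / (n:ℝ)))) / (n * Real.sqrt 2) := by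
      intro j
      rw [hV j k, hV j l, if_neg hk, if_pos hl, hnR]
      have : Real.sqrt (w j) * Real.cos (π * k * ((j:ℕ) / (n:ℝ))) * (Real.sqrt (w j) / Real.sqrt 2)
          = Real.sqrt (w j) * Real.sqrt (w j) * Real.cos (π * k * ((j:ℕ) / (n:ℝ))) / Real.sqrt 2 := by
        ring
      rw [this, Real.mul_self_sqrt (hwnn j), hwval j]
      have hs2 : Real.sqrt 2 ≠ 0 := by positivity
      field_simp
    rw [Finset.sum_congr rfl fun j _ => hsummand j,
      Fin.sum_univ_eq_sum_range (fun j => ((if j = 0 ∨ j = n then (1/2 : ℝ) else 1) *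
        Real.cos (π * k * ((j:ℕ) / (n:ℝ)))) / (n * Real.sqrt 2)) r, hrn,
      ← Finset.sum_div]
    have hkM : (k : ℕ) ≤ M := by omega
    rw [keyS n k hn1 (by omega), if_neg hk]
    simp
  · -- both nonzero
    have hsummand : ∀ j : Fin r,
        V j k * V j l = ((if (j:ℕ) = 0 ∨ (j:ℕ) = n then (1/2 : ℝ) else 1) *
          (Real.cos (π * k * ((j:ℕ) / (n:ℝ))) * Real.cos (π * l * ((j:ℕ) / (n:ℝ))))) / n := by
      intro j
      rw [hV j k, hV j l, if_neg hk, if_neg hl, hnR]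
      have : Real.sqrt (w j) * Real.cos (π * k * ((j:ℕ) / (n:ℝ))) *
          (Real.sqrt (w j) * Real.cos (π * l * ((j:ℕ) / (n:ℝ))))
          = Real.sqrt (w j) * Real.sqrt (w j) *
            (Real.cos (π * k * ((j:ℕ) / (n:ℝ))) * Real.cos (π * l * ((j:ℕ) / (n:ℝ)))) := by
        ring
      rw [this, Real.mul_self_sqrt (hwnn j), hwval j]
      ring
    rw [Finset.sum_congr rfl fun j _ => hsummand j,
      Fin.sum_univ_eq_sum_range (fun j => ((if j = 0 ∨ j = n then (1/2 : ℝ) else 1) *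
        (Real.cos (π * k * ((j:ℕ) / (n:ℝ))) * Real.cos (π * l * ((j:ℕ) / (n:ℝ))))) / n) r, hrn,
      ← Finset.sum_div]
    have hkM : (k : ℕ) ≤ M := by omega
    have hlM : (l : ℕ) ≤ M := by omega
    rw [pairSum n k l hn1 (by omega) (by omega) (by omega) (by omega)]
    rcases eq_or_ne k l with h | h
    · rw [if_pos (by rw [h]), if_pos h]
      field_simp
    · rw [if_neg (fun hh => h (Fin.ext hh)), if_neg h]
      simp
end
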